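/- Let $\nu$ be the measure on $(0,\infty)$ with density $\frac{\pi}{4}x^{-1/2}e^{-\sqrt{x}}$, viewed as a L\'evy measure on $\mathbb{R}$ concentrated on $(0,\infty)$. Then its arcsine transform satisfies $\mathcal{A}_1(\nu)(dr) = K_0(r)1_{(0,\infty)}(r)\,dr$, where $K_0(r) = \int_1^{\infty}(t^2-1)^{-1/2}e^{-rt}\,dt$. Equivalently, for $r>0$: $\int_{r^2}^{\infty}\frac{2}{\pi}(s-r^2)^{-1/2}\cdot\frac{\pi}{4}s^{-1/2}e^{-\sqrt{s}}\,ds = K_0(r)$. -/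

import Mathlib

open MeasureTheory Real Set ENNReal

/-- The modified Bessel function `K₀`, via the representation
`K₀(x) = ∫₁^∞ (t²-1)^{-1/2} e^{-xt} dt`. -/
noncomputable def K0 (x : ℝ) : ℝ :=
  ∫ t in Set.Ioi (1 : ℝ), (t ^ 2 - 1) ^ (-(1/2) : ℝ) * Real.exp (-(x * t))

/-- The arcsine transform of the Lévy measure `(π/4) s^{-1/2} e^{-√s} ds` has density `K₀`. -/
theorem arcsineT_density_eq_K0 (r : ℝ) (hr : 0 < r) :
    ∫ s in Set.Ioi (r ^ 2),
        2 / Real.pi * (s - r ^ 2) ^ (-(1/2) : ℝ) *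
          (Real.pi / 4 * s ^ (-(1/2) : ℝ) * Real.exp (-Real.sqrt s)) = K0 r := by
  have hr2 : (0:ℝ) < r^2 := by positivity
  have himg : Set.Ioi (r^2) = (fun t : ℝ => r^2 * t^2) '' Set.Ioi 1 := by
    ext s
    simp only [Set.mem_image, Set.mem_Ioi]
    constructor
    · intro hs
      have hs0 : 0 < s := hr2.trans hs
      refine ⟨Real.sqrt s / r, ?_, ?_⟩
      · rw [lt_div_iff₀ hr, one_mul]
        have h : r = Real.sqrt (r^2) := (Real.sqrt_sq hr.le).symm
        rw [h]
        exact Real.sqrt_lt_sqrt (sq_nonneg r) hs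
      · rw [div_pow, Real.sq_sqrt hs0.le]
        field_simp
    · rintro ⟨t, ht, rfl⟩
      nlinarith [mul_pos hr2 (show (0:ℝ) < t^2 - 1 by nlinarith)]
  have hderiv : ∀ t ∈ Set.Ioi (1:ℝ), HasDerivWithinAt (fun t : ℝ => r^2 * t^2)
      ((fun t : ℝ => 2 * r^2 * t) t) (Set.Ioi 1) t := by
    intro t _
    have h : HasDerivAt (fun t : ℝ => r^2 * t^2) (2 * r^2 * t) t := by
      have := (hasDerivAt_pow 2 t).const_mul (r^2)
      simp only [Nat.cast_ofNat, pow_one] at this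
      exact this.congr_deriv (by rw [show (2:ℕ) - 1 = 1 from rfl, pow_one]; ring)
    exact h.hasDerivWithinAt
  have hinj : Set.InjOn (fun t : ℝ => r^2 * t^2) (Set.Ioi 1) := by
    intro a ha b hb h
    have ha0 : (0:ℝ) ≤ a := le_of_lt (lt_trans one_pos ha)
    have hb0 : (0:ℝ) ≤ b := le_of_lt (lt_trans one_pos hb)
    have h2 : a^2 = b^2 := mul_left_cancel₀ (ne_of_gt hr2) h
    calc a = Real.sqrt (a^2) := (Real.sqrt_sq ha0).symm
    _ = Real.sqrt (b^2) := by rw [h2]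
    _ = b := Real.sqrt_sq hb0
  rw [himg, MeasureTheory.integral_image_eq_integral_abs_deriv_smul measurableSet_Ioi
      hderiv hinj]
  unfold K0
  refine setIntegral_congr_fun measurableSet_Ioi fun t ht => ?_
  have ht1 : (1:ℝ) < t := ht
  have ht0 : (0:ℝ) < t := lt_trans one_pos ht1
  have hrt : 0 < r * t := mul_pos hr ht0
  have hsq : Real.sqrt (r^2 * t^2) = r * t := by
    rw [← mul_pow, Real.sqrt_sq hrt.le]
  have h1 : (r^2 * t^2 - r^2) ^ (-(1/2) : ℝ) = r⁻¹ * (t^2 - 1) ^ (-(1/2) : ℝ) := by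
    have h : r^2 * t^2 - r^2 = r^2 * (t^2 - 1) := by ring
    rw [h, Real.mul_rpow (sq_nonneg r) (by nlinarith)]
    congr 1
    rw [← Real.rpow_natCast r 2, ← Real.rpow_mul hr.le]
    norm_num [Real.rpow_neg_one]
  have h2 : (r^2 * t^2 : ℝ) ^ (-(1/2) : ℝ) = (r * t)⁻¹ := by
    rw [← mul_pow, ← Real.rpow_natCast (r*t) 2, ← Real.rpow_mul hrt.le]
    norm_num [Real.rpow_neg_one]
  simp only [smul_eq_mul]
  rw [hsq, h1, h2, abs_of_pos (by positivity)]
  have hπ : Real.pi ≠ 0 := Real.pi_ne_zero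
  field_simp
  ring
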